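/- Every step-dependent sequential scoring rule is continuous: for all disjoint profiles A, A' and every committee size k such that |f(A,k)| = 1, there exists a positive integer j such that f(jA + A', k) = f(A,k), where jA denotes j disjoint copies of A. -/

import Mathlib

open Finset
open scoped Classical

structure Profile (C : Type) where
  voters : Finset ℕ
  ballot : ℕ → Finset C

namespace Profile

variable {C : Type}

def combine (A B : Profile C) : Profile C :=
  ⟨A.voters ∪ B.voters, fun i => if i ∈ A.voters then A.ballot i else B.ballot i⟩

def Disj (A B : Profile C) : Prop := Disjoint A.voters B.voters

def permVoters (π : Equiv.Perm ℕ) (A : Profile C) : Profile C :=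
  ⟨A.voters.map π.toEmbedding, fun i => A.ballot (π.symm i)⟩

def mapCand [DecidableEq C] (τ : Equiv.Perm C) (A : Profile C) : Profile C :=
  ⟨A.voters, fun i => (A.ballot i).image τ⟩

end Profile

variable {C : Type} [Fintype C] [DecidableEq C]

/-- `B` is a relabeled (disjoint-renaming) copy of the profile `A`. -/
def IsCopy (A B : Profile C) : Prop :=
  ∃ e : ℕ ↪ ℕ, B.voters = A.voters.map e ∧ ∀ i ∈ A.voters, B.ballot (e i) = A.ballot i

/-- `B` consists of `j` pairwise disjoint copies of the profile `A`. -/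
def IsNCopies (j : ℕ) (A B : Profile C) : Prop :=
  ∃ P : Fin j → Profile C,
    (∀ t, IsCopy A (P t)) ∧
    (∀ s t, s ≠ t → Disjoint (P s).voters (P t).voters) ∧
    B.voters = Finset.univ.biUnion (fun t => (P t).voters) ∧
    ∀ t, ∀ i ∈ (P t).voters, B.ballot i = (P t).ballot i

noncomputable def scoreV (v : Finset C → Finset C → ℝ) (A : Profile C) (W : Finset C) : ℝ :=
  ∑ i ∈ A.voters, v (A.ballot i) W

/-- The candidates whose addition to `W` maximizes the total score. -/
noncomputable def genOf (v : Finset C → Finset C → ℝ) (A : Profile C) (W : Finset C) : Finset C :=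
  (univ \ W).filter fun x => ∀ y ∈ univ \ W, scoreV v A (insert y W) ≤ scoreV v A (insert x W)

/-- The sequential valuation rule induced by the valuation function `v`. -/
noncomputable def seqRule (v : Finset C → Finset C → ℝ) : Profile C → ℕ → Finset (Finset C)
  | _, 0 => {∅}
  | A, k+1 => (seqRule v A k).biUnion fun W => (genOf v A W).image fun x => insert x W

/-- The sequential scoring rule induced by a step-dependent counting function
`h(|Aᵢ ∩ W|, |W|, |Aᵢ|)`. -/
noncomputable def stepRule (h : ℕ → ℕ → ℕ → ℝ) : Profile C → ℕ → Finset (Finset C) :=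
  seqRule fun b W => h ((b ∩ W).card) W.card b.card

/-- The non-degeneracy condition on step-dependent counting functions. -/
def IsStepCounting (m : ℕ) (h : ℕ → ℕ → ℕ → ℝ) : Prop :=
  ∀ y, 1 ≤ y → y ≤ m - 1 →
    ∃ x z, 1 ≤ x ∧ x ≤ y ∧ x ≤ z ∧ z ≤ m - 1 - (y - x) ∧ h x y z ≠ h (x-1) y z

section AuxLemmas

lemma scoreV_combine (v : Finset C → Finset C → ℝ) (A B : Profile C)
    (hd : A.Disj B) (W : Finset C) :
    scoreV v (A.combine B) W = scoreV v A W + scoreV v B W := by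
  unfold scoreV Profile.combine
  rw [Finset.sum_union hd]
  congr 1
  · exact Finset.sum_congr rfl fun i hi => by simp [hi]
  · refine Finset.sum_congr rfl fun i hi => ?_
    have hni : i ∉ A.voters := fun hA => (Finset.disjoint_left.mp hd hA) hi
    simp [hni]

lemma scoreV_copy (v : Finset C → Finset C → ℝ) {A B : Profile C}
    (hc : IsCopy A B) (W : Finset C) : scoreV v B W = scoreV v A W := by
  obtain ⟨e, hv, hb⟩ := hc
  unfold scoreV
  rw [hv, Finset.sum_map]
  exact Finset.sum_congr rfl fun i hi => by rw [hb i hi]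

lemma scoreV_ncopies (v : Finset C → Finset C → ℝ) {j : ℕ} {A B : Profile C}
    (hB : IsNCopies j A B) (W : Finset C) :
    scoreV v B W = (j : ℝ) * scoreV v A W := by
  obtain ⟨P, hcopy, hdisj, hv, hb⟩ := hB
  have hpd : ((Finset.univ : Finset (Fin j)) : Set (Fin j)).PairwiseDisjoint
      fun t => (P t).voters := fun s _ t _ hst => hdisj s t hst
  have hinner : ∀ t, ∑ i ∈ (P t).voters, v (B.ballot i) W = scoreV v A W := by
    intro t
    rw [← scoreV_copy v (hcopy t) W]
    exact Finset.sum_congr rfl fun i hi => by rw [hb t i hi]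
  calc scoreV v B W = ∑ t : Fin j, ∑ i ∈ (P t).voters, v (B.ballot i) W := by
        unfold scoreV; rw [hv, Finset.sum_biUnion hpd]
    _ = ∑ _t : Fin j, scoreV v A W := Finset.sum_congr rfl fun t _ => hinner t
    _ = (j : ℝ) * scoreV v A W := by
        rw [Finset.sum_const, Finset.card_univ, Fintype.card_fin, nsmul_eq_mul]

lemma genOf_nonempty (v : Finset C → Finset C → ℝ) (A : Profile C) (W : Finset C)
    (hW : W ≠ Finset.univ) : (genOf v A W).Nonempty := by
  have hne : (Finset.univ \ W).Nonempty := by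
    rw [Finset.sdiff_nonempty]
    exact fun hsub => hW (Finset.univ_subset_iff.mp hsub)
  obtain ⟨x, hx, hmax⟩ :=
    Finset.exists_max_image (Finset.univ \ W) (fun x => scoreV v A (insert x W)) hne
  exact ⟨x, Finset.mem_filter.mpr ⟨hx, fun y hy => hmax y hy⟩⟩

lemma card_of_mem_seqRule (v : Finset C → Finset C → ℝ) (A : Profile C) :
    ∀ l W, W ∈ seqRule v A l → W.card = l := by
  intro l
  induction l with
  | zero =>
    intro W hW
    simp only [seqRule, Finset.mem_singleton] at hW
    simp [hW]
  | succ n ih =>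
    intro W hW
    simp only [seqRule, Finset.mem_biUnion, Finset.mem_image] at hW
    obtain ⟨W', hW', x, hx, rfl⟩ := hW
    have hxW : x ∉ W' := (Finset.mem_sdiff.mp (Finset.mem_filter.mp hx).1).2
    rw [Finset.card_insert_of_notMem hxW, ih W' hW']

end AuxLemmas

/-- Every step-dependent sequential scoring rule is continuous: if `f(A,k)` is a singleton, then
for a sufficiently large number `j` of disjoint copies of `A`, adding any disjoint profile `A'`
does not change the outcome. -/
theorem stepRule_continuous (h : ℕ → ℕ → ℕ → ℝ)
    (hh : IsStepCounting (Fintype.card C) h)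
    (A A' : Profile C) (k : ℕ) (hd : A.Disj A')
    (h1 : (stepRule h A k).card = 1) :
    ∃ j, 0 < j ∧ ∀ B : Profile C, IsNCopies j A B → B.Disj A' →
      stepRule h (B.combine A') k = stepRule h A k := by
  set v : Finset C → Finset C → ℝ := fun b W => h ((b ∩ W).card) W.card b.card with hvdef
  have hsr : ∀ (P : Profile C) (l : ℕ), stepRule h P l = seqRule v P l := fun _ _ => rfl
  -- a uniform positive lower bound on all strict score gaps of A
  obtain ⟨δ, hδpos, hδ⟩ : ∃ δ : ℝ, 0 < δ ∧ ∀ T T' : Finset C,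
      scoreV v A T < scoreV v A T' → δ ≤ scoreV v A T' - scoreV v A T := by
    by_cases hD : ∃ T T' : Finset C, scoreV v A T < scoreV v A T'
    · set D := (Finset.univ ×ˢ Finset.univ : Finset (Finset C × Finset C)).filter
        (fun p => scoreV v A p.1 < scoreV v A p.2) with hDdef
      have hDne : D.Nonempty := by
        obtain ⟨T, T', hTT⟩ := hD
        exact ⟨(T, T'), by simp [hDdef, hTT]⟩
      obtain ⟨p, hp, hmin⟩ :=
        Finset.exists_min_image D (fun p => scoreV v A p.2 - scoreV v A p.1) hDne
      have hppos : scoreV v A p.1 < scoreV v A p.2 := (Finset.mem_filter.mp hp).2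
      refine ⟨scoreV v A p.2 - scoreV v A p.1, by linarith, fun T T' hTT => ?_⟩
      exact hmin (T, T') (by simp [hDdef, hTT])
    · exact ⟨1, one_pos, fun T T' hTT => absurd ⟨T, T', hTT⟩ hD⟩
  -- a bound on the scores coming from A'
  obtain ⟨M, hM⟩ : ∃ M : ℝ, ∀ T : Finset C, |scoreV v A' T| ≤ M := by
    obtain ⟨T0, _, hT0⟩ := Finset.exists_max_image Finset.univ
      (fun T : Finset C => |scoreV v A' T|) ⟨∅, Finset.mem_univ _⟩
    exact ⟨_, fun T => hT0 T (Finset.mem_univ T)⟩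
  obtain ⟨n, hn⟩ := exists_nat_gt ((2 * M) / δ)
  refine ⟨n + 1, Nat.succ_pos n, ?_⟩
  have hjδ : 2 * M < ((n + 1 : ℕ) : ℝ) * δ := by
    rw [div_lt_iff₀ hδpos] at hn
    have hcast : ((n : ℝ)) * δ ≤ ((n + 1 : ℕ) : ℝ) * δ := by
      push_cast; nlinarith
    linarith
  intro B hB hdB
  set Q := B.combine A' with hQdef
  have hscoreQ : ∀ T, scoreV v Q T = ((n + 1 : ℕ) : ℝ) * scoreV v A T + scoreV v A' T := by
    intro T
    rw [hQdef, scoreV_combine v B A' hdB, scoreV_ncopies v hB]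
  -- the singleton winner of A
  obtain ⟨Wstar, hWstar⟩ := Finset.card_eq_one.mp h1
  have hWstar' : seqRule v A k = {Wstar} := by rw [← hsr]; exact hWstar
  have hk : k ≤ Fintype.card C := by
    have hcard := card_of_mem_seqRule v A k Wstar
      (by rw [hWstar']; exact Finset.mem_singleton_self _)
    calc k = Wstar.card := hcard.symm
      _ ≤ Finset.univ.card := Finset.card_le_univ Wstar
      _ = Fintype.card C := Finset.card_univ
  -- key: maximizers for Q are maximizers for A
  have hgen : ∀ W : Finset C, W ≠ Finset.univ → genOf v Q W ⊆ genOf v A W := by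
    intro W hW x hx
    obtain ⟨hx1, hx2⟩ := Finset.mem_filter.mp hx
    by_contra hxA
    obtain ⟨x', hx'⟩ := genOf_nonempty v A W hW
    obtain ⟨hx'1, hx'2⟩ := Finset.mem_filter.mp hx'
    have hex : ∃ y ∈ Finset.univ \ W,
        scoreV v A (insert x W) < scoreV v A (insert y W) := by
      by_contra hno
      push_neg at hno
      exact hxA (Finset.mem_filter.mpr ⟨hx1, fun y hy => hno y hy⟩)
    obtain ⟨y, hy, hxy⟩ := hex
    have hlt : scoreV v A (insert x W) < scoreV v A (insert x' W) :=
      lt_of_lt_of_le hxy (hx'2 y hy)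
    have hgap := hδ _ _ hlt
    have hq1 : scoreV v Q (insert x' W) ≤ scoreV v Q (insert x W) := hx2 x' hx'1
    have e1 := hscoreQ (insert x W)
    have e2 := hscoreQ (insert x' W)
    have m1 := abs_le.mp (hM (insert x W))
    have m2 := abs_le.mp (hM (insert x' W))
    have hjnn : (0 : ℝ) ≤ ((n + 1 : ℕ) : ℝ) := by positivity
    have hmono := mul_le_mul_of_nonneg_left hgap hjnn
    rw [mul_sub] at hmono
    linarith
  -- induction: outcomes of Q are a nonempty subset of outcomes of A
  have main : ∀ l, l ≤ k → seqRule v Q l ⊆ seqRule v A l ∧ (seqRule v Q l).Nonempty := by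
    intro l
    induction l with
    | zero =>
      intro _
      constructor
      · simp [seqRule]
      · simp [seqRule]
    | succ n' ih =>
      intro hl
      obtain ⟨hsub, hne⟩ := ih (Nat.le_of_succ_le hl)
      have hnuniv : ∀ W' ∈ seqRule v Q n', W' ≠ Finset.univ := by
        intro W' hW' hu
        have hcard := card_of_mem_seqRule v A n' W' (hsub hW')
        rw [hu, Finset.card_univ] at hcard
        omega
      constructor
      · intro W hW
        simp only [seqRule, Finset.mem_biUnion, Finset.mem_image] at hW ⊢
        obtain ⟨W', hW', x, hx, rfl⟩ := hW
        exact ⟨W', hsub hW', x, hgen W' (hnuniv W' hW') hx, rfl⟩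
      · obtain ⟨W', hW'⟩ := hne
        obtain ⟨x, hx⟩ := genOf_nonempty v Q W' (hnuniv W' hW')
        refine ⟨insert x W', ?_⟩
        simp only [seqRule, Finset.mem_biUnion, Finset.mem_image]
        exact ⟨W', hW', x, hx, rfl⟩
  obtain ⟨hsub, hne⟩ := main k le_rfl
  rw [hsr, hsr, hWstar']
  refine Finset.eq_singleton_iff_nonempty_unique_mem.mpr ⟨hne, fun x hx => ?_⟩
  have := hsub hx
  rw [hWstar'] at this
  exact Finset.mem_singleton.mp this
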